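/- Let Ω ⊆ ℝ^d be measurable, q a probability density on Ω, and for each x₁ ∈ Ω let p_t(x|x₁) be a conditional probability path and v_t(x|x₁) a conditional velocity field, all measurable with the integrals below finite. Define p_t(x) = ∫_Ω p_t(x|x₁) q(x₁) dx₁, assume p_t(x) > 0 for all x in the interior of Ω and t ∈ [0,1], and define v_t(x) = ∫_Ω v_t(x|x₁) p_t(x|x₁) q(x₁) / p_t(x) dx₁. For any measurable function u : Ω × [0,1] → ℝ^d define the reflected flow matching objective L_RFM(u) = ∫₀¹ ∫_Ω ‖u(x,t) − v_t(x)‖² p_t(x) dx dt and the conditional reflected flow matching objective L_CRFM(u) = ∫₀¹ ∫_Ω ∫_Ω ‖u(x,t) − v_t(x|x₁)‖² p_t(x|x₁) q(x₁) dx₁ dx dt. Then L_CRFM(u) − L_RFM(u) = ∫₀¹ ( ∫_Ω ∫_Ω ‖v_t(x|x₁)‖² p_t(x|x₁) q(x₁) dx₁ dx − ∫_Ω ‖v_t(x)‖² p_t(x) dx ) dt, a quantity that does not depend on u; consequently, for any two measurable u₁, u₂ : Ω × [0,1] → ℝ^d (with the objectives finite), L_CRFM(u₁) − L_CRFM(u₂)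 = L_RFM(u₁) − L_RFM(u₂), so the two objectives have identical minimizers and identical gradients with respect to any parametrization of u. -/
import Mathlib


open MeasureTheory Set

open scoped RealInnerProductSpace

variable {d : ℕ}

/-- The marginal probability path `p_t(x) = ∫_Ω p_t(x|x₁) q(x₁) dx₁`. -/
noncomputable def marginalPath (Ω : Set (EuclideanSpace ℝ (Fin d)))
    (q : EuclideanSpace ℝ (Fin d) → ℝ)
    (p : EuclideanSpace ℝ (Fin d) → ℝ → EuclideanSpace ℝ (Fin d) → ℝ)
    (t : ℝ) (x : EuclideanSpace ℝ (Fin d)) : ℝ :=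
  ∫ x₁ in Ω, p x₁ t x * q x₁

/-- The marginal velocity field
`v_t(x) = ∫_Ω v_t(x|x₁) p_t(x|x₁) q(x₁) / p_t(x) dx₁`. -/
noncomputable def marginalVel (Ω : Set (EuclideanSpace ℝ (Fin d)))
    (q : EuclideanSpace ℝ (Fin d) → ℝ)
    (p : EuclideanSpace ℝ (Fin d) → ℝ → EuclideanSpace ℝ (Fin d) → ℝ)
    (v : EuclideanSpace ℝ (Fin d) → ℝ → EuclideanSpace ℝ (Fin d) → EuclideanSpace ℝ (Fin d))
    (t : ℝ) (x : EuclideanSpace ℝ (Fin d)) : EuclideanSpace ℝ (Fin d) :=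
  (marginalPath Ω q p t x)⁻¹ • ∫ x₁ in Ω, (p x₁ t x * q x₁) • v x₁ t x

/-- The reflected flow matching objective
`L_RFM(u) = ∫₀¹ ∫_Ω ‖u(x,t) − v_t(x)‖² p_t(x) dx dt`. -/
noncomputable def LRFM (Ω : Set (EuclideanSpace ℝ (Fin d)))
    (q : EuclideanSpace ℝ (Fin d) → ℝ)
    (p : EuclideanSpace ℝ (Fin d) → ℝ → EuclideanSpace ℝ (Fin d) → ℝ)
    (v : EuclideanSpace ℝ (Fin d) → ℝ → EuclideanSpace ℝ (Fin d) → EuclideanSpace ℝ (Fin d))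
    (u : EuclideanSpace ℝ (Fin d) → ℝ → EuclideanSpace ℝ (Fin d)) : ℝ :=
  ∫ t in Icc (0:ℝ) 1, ∫ x in Ω, ‖u x t - marginalVel Ω q p v t x‖ ^ 2 * marginalPath Ω q p t x

/-- The conditional reflected flow matching objective
`L_CRFM(u) = ∫₀¹ ∫_Ω ∫_Ω ‖u(x,t) − v_t(x|x₁)‖² p_t(x|x₁) q(x₁) dx₁ dx dt`. -/
noncomputable def LCRFM (Ω : Set (EuclideanSpace ℝ (Fin d)))
    (q : EuclideanSpace ℝ (Fin d) → ℝ)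
    (p : EuclideanSpace ℝ (Fin d) → ℝ → EuclideanSpace ℝ (Fin d) → ℝ)
    (v : EuclideanSpace ℝ (Fin d) → ℝ → EuclideanSpace ℝ (Fin d) → EuclideanSpace ℝ (Fin d))
    (u : EuclideanSpace ℝ (Fin d) → ℝ → EuclideanSpace ℝ (Fin d)) : ℝ :=
  ∫ t in Icc (0:ℝ) 1, ∫ x in Ω, ∫ x₁ in Ω, ‖u x t - v x₁ t x‖ ^ 2 * (p x₁ t x * q x₁)

/-- `u` is measurable and the integrals appearing in `L_RFM(u)` and `L_CRFM(u)`
are finite. -/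
def Admissible (Ω : Set (EuclideanSpace ℝ (Fin d)))
    (q : EuclideanSpace ℝ (Fin d) → ℝ)
    (p : EuclideanSpace ℝ (Fin d) → ℝ → EuclideanSpace ℝ (Fin d) → ℝ)
    (v : EuclideanSpace ℝ (Fin d) → ℝ → EuclideanSpace ℝ (Fin d) → EuclideanSpace ℝ (Fin d))
    (u : EuclideanSpace ℝ (Fin d) → ℝ → EuclideanSpace ℝ (Fin d)) : Prop :=
  Measurable (fun z : EuclideanSpace ℝ (Fin d) × ℝ => u z.1 z.2) ∧
  (∀ t ∈ Icc (0:ℝ) 1,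
    IntegrableOn (fun x => ‖u x t - marginalVel Ω q p v t x‖ ^ 2 * marginalPath Ω q p t x) Ω) ∧
  (∀ t ∈ Icc (0:ℝ) 1,
    Integrable
      (fun z : EuclideanSpace ℝ (Fin d) × EuclideanSpace ℝ (Fin d) =>
        ‖u z.1 t - v z.2 t z.1‖ ^ 2 * (p z.2 t z.1 * q z.2))
      ((volume.restrict Ω).prod (volume.restrict Ω))) ∧
  IntegrableOn
    (fun t => ∫ x in Ω, ‖u x t - marginalVel Ω q p v t x‖ ^ 2 * marginalPath Ω q p t x)
    (Icc (0:ℝ) 1) ∧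
  IntegrableOn
    (fun t => ∫ x in Ω, ∫ x₁ in Ω, ‖u x t - v x₁ t x‖ ^ 2 * (p x₁ t x * q x₁))
    (Icc (0:ℝ) 1)

/-- **The RFM and CRFM objectives differ by a constant independent of the
velocity model** (Theorem 3 of "Reflected Flow Matching"). Hence
`L_CRFM(u₁) − L_CRFM(u₂) = L_RFM(u₁) − L_RFM(u₂)` for any two admissible
velocity models, so the two objectives have identical minimizers and
gradients. -/
lemma key_t
    (Ω : Set (EuclideanSpace ℝ (Fin d))) (hΩ : MeasurableSet Ω)
    (q : EuclideanSpace ℝ (Fin d) → ℝ) (hq_meas : Measurable q)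
    (hq_nonneg : ∀ x₁ ∈ Ω, 0 ≤ q x₁) (hq_int : ∫ x₁ in Ω, q x₁ = 1)
    (p : EuclideanSpace ℝ (Fin d) → ℝ → EuclideanSpace ℝ (Fin d) → ℝ)
    (hp_meas : Measurable fun z : EuclideanSpace ℝ (Fin d) × ℝ × EuclideanSpace ℝ (Fin d) =>
      p z.1 z.2.1 z.2.2)
    (hp_nonneg : ∀ x₁ ∈ Ω, ∀ t ∈ Icc (0:ℝ) 1, ∀ x ∈ Ω, 0 ≤ p x₁ t x)
    (hp_int : ∀ x₁ ∈ Ω, ∀ t ∈ Icc (0:ℝ) 1, ∫ x in Ω, p x₁ t x = 1)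
    (v : EuclideanSpace ℝ (Fin d) → ℝ → EuclideanSpace ℝ (Fin d) → EuclideanSpace ℝ (Fin d))
    (hv_meas : Measurable fun z : EuclideanSpace ℝ (Fin d) × ℝ × EuclideanSpace ℝ (Fin d) =>
      v z.1 z.2.1 z.2.2)
    (t : ℝ) (ht : t ∈ Icc (0:ℝ) 1)
    (hv_int : Integrable
        (fun z : EuclideanSpace ℝ (Fin d) × EuclideanSpace ℝ (Fin d) =>
          ‖v z.2 t z.1‖ ^ 2 * (p z.2 t z.1 * q z.2))
        ((volume.restrict Ω).prod (volume.restrict Ω)))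
    (hvM_int : IntegrableOn (fun x => ‖marginalVel Ω q p v t x‖ ^ 2 * marginalPath Ω q p t x) Ω)
    (u : EuclideanSpace ℝ (Fin d) → ℝ → EuclideanSpace ℝ (Fin d))
    (hu1 : Measurable (fun z : EuclideanSpace ℝ (Fin d) × ℝ => u z.1 z.2))
    (hu2 : IntegrableOn (fun x => ‖u x t - marginalVel Ω q p v t x‖ ^ 2 * marginalPath Ω q p t x) Ω)
    (hu3 : Integrable
      (fun z : EuclideanSpace ℝ (Fin d) × EuclideanSpace ℝ (Fin d) =>
        ‖u z.1 t - v z.2 t z.1‖ ^ 2 * (p z.2 t z.1 * q z.2))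
      ((volume.restrict Ω).prod (volume.restrict Ω))) :
    (∫ x in Ω, ∫ x₁ in Ω, ‖u x t - v x₁ t x‖ ^ 2 * (p x₁ t x * q x₁))
      - (∫ x in Ω, ‖u x t - marginalVel Ω q p v t x‖ ^ 2 * marginalPath Ω q p t x)
    = (∫ x in Ω, ∫ x₁ in Ω, ‖v x₁ t x‖ ^ 2 * (p x₁ t x * q x₁))
      - ∫ x in Ω, ‖marginalVel Ω q p v t x‖ ^ 2 * marginalPath Ω q p t x := by
  set μ := volume.restrict Ω with hμ
  -- measurability helpers
  have hmp : Measurable fun z : EuclideanSpace ℝ (Fin d) × EuclideanSpace ℝ (Fin d) =>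
      p z.2 t z.1 :=
    hp_meas.comp (measurable_snd.prodMk (measurable_const.prodMk measurable_fst))
  have hmq : Measurable fun z : EuclideanSpace ℝ (Fin d) × EuclideanSpace ℝ (Fin d) => q z.2 :=
    hq_meas.comp measurable_snd
  have hmv : Measurable fun z : EuclideanSpace ℝ (Fin d) × EuclideanSpace ℝ (Fin d) =>
      v z.2 t z.1 :=
    hv_meas.comp (measurable_snd.prodMk (measurable_const.prodMk measurable_fst))
  have hmu : Measurable fun z : EuclideanSpace ℝ (Fin d) × EuclideanSpace ℝ (Fin d) => u z.1 t :=
    hu1.comp (measurable_fst.prodMk measurable_const)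
  have hmP : Measurable fun z : EuclideanSpace ℝ (Fin d) × EuclideanSpace ℝ (Fin d) =>
      p z.2 t z.1 * q z.2 := hmp.mul hmq
  -- a.e. membership in the product
  have hmem : ∀ᵐ z ∂(μ.prod μ), z.1 ∈ Ω ∧ z.2 ∈ Ω := by
    rw [hμ, Measure.prod_restrict]
    filter_upwards [ae_restrict_mem (hΩ.prod hΩ)] with z hz
    exact hz
  have hPnn : ∀ᵐ z ∂(μ.prod μ), 0 ≤ p z.2 t z.1 * q z.2 := by
    filter_upwards [hmem] with z hz
    exact mul_nonneg (hp_nonneg _ hz.2 t ht _ hz.1) (hq_nonneg _ hz.2)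
  -- q is integrable
  have hqi : Integrable q μ := integrable_of_integral_eq_one hq_int
  -- p slice integrable
  have hpi : ∀ x₁ ∈ Ω, Integrable (fun x => p x₁ t x) μ := fun x₁ hx₁ =>
    integrable_of_integral_eq_one (hp_int x₁ hx₁ t ht)
  -- P is integrable on the product
  have HP : Integrable (fun z : EuclideanSpace ℝ (Fin d) × EuclideanSpace ℝ (Fin d) =>
      p z.2 t z.1 * q z.2) (μ.prod μ) := by
    refine (integrable_prod_iff' hmP.aestronglyMeasurable).mpr ⟨?_, ?_⟩
    · filter_upwards [ae_restrict_mem hΩ] with x₁ hx₁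
      exact (hpi x₁ hx₁).mul_const (q x₁)
    · refine hqi.abs.congr ?_
      filter_upwards [ae_restrict_mem hΩ] with x₁ hx₁
      have h1 : ∀ x ∈ Ω, ‖p x₁ t x * q x₁‖ = p x₁ t x * |q x₁| := by
        intro x hx
        rw [norm_mul, Real.norm_eq_abs, Real.norm_eq_abs,
          abs_of_nonneg (hp_nonneg _ hx₁ t ht _ hx)]
      calc |q x₁| = (∫ x in Ω, p x₁ t x) * |q x₁| := by rw [hp_int x₁ hx₁ t ht, one_mul]
        _ = ∫ x in Ω, p x₁ t x * |q x₁| := (integral_mul_const _ _).symm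
        _ = ∫ x, ‖p x₁ t x * q x₁‖ ∂μ := by
            refine setIntegral_congr_fun hΩ fun x hx => ?_
            rw [h1 x hx]
  -- integrability of ‖u‖² * P on the product
  have Huu : Integrable (fun z : EuclideanSpace ℝ (Fin d) × EuclideanSpace ℝ (Fin d) =>
      ‖u z.1 t‖ ^ 2 * (p z.2 t z.1 * q z.2)) (μ.prod μ) := by
    refine Integrable.mono' (((hu3.add hv_int).const_mul 2)) ?_ ?_
    · exact ((hmu.norm.pow measurable_const).mul hmP).aestronglyMeasurable
    · filter_upwards [hPnn] with z hz
      have h1 : ‖u z.1 t‖ ^ 2 ≤ 2 * ‖u z.1 t - v z.2 t z.1‖ ^ 2 + 2 * ‖v z.2 t z.1‖ ^ 2 := by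
        have h2 : ‖u z.1 t‖ ≤ ‖u z.1 t - v z.2 t z.1‖ + ‖v z.2 t z.1‖ := by
          simpa using norm_add_le (u z.1 t - v z.2 t z.1) (v z.2 t z.1)
        nlinarith [norm_nonneg (u z.1 t), norm_nonneg (u z.1 t - v z.2 t z.1),
          norm_nonneg (v z.2 t z.1), sq_nonneg (‖u z.1 t - v z.2 t z.1‖ - ‖v z.2 t z.1‖)]
      have h3 : 0 ≤ ‖u z.1 t‖ ^ 2 * (p z.2 t z.1 * q z.2) :=
        mul_nonneg (sq_nonneg _) hz
      rw [Real.norm_eq_abs, abs_of_nonneg h3]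
      calc ‖u z.1 t‖ ^ 2 * (p z.2 t z.1 * q z.2)
          ≤ (2 * ‖u z.1 t - v z.2 t z.1‖ ^ 2 + 2 * ‖v z.2 t z.1‖ ^ 2) * (p z.2 t z.1 * q z.2) :=
            mul_le_mul_of_nonneg_right h1 hz
        _ = 2 * (‖u z.1 t - v z.2 t z.1‖ ^ 2 * (p z.2 t z.1 * q z.2)
              + ‖v z.2 t z.1‖ ^ 2 * (p z.2 t z.1 * q z.2)) := by ring
  -- integrability of inner product * P on the product
  have Hin : Integrable (fun z : EuclideanSpace ℝ (Fin d) × EuclideanSpace ℝ (Fin d) =>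
      ⟪u z.1 t, v z.2 t z.1⟫ * (p z.2 t z.1 * q z.2)) (μ.prod μ) := by
    refine Integrable.mono' (Huu.add hv_int) ?_ ?_
    · exact ((hmu.inner hmv).mul hmP).aestronglyMeasurable
    · filter_upwards [hPnn] with z hz
      have h1 : |⟪u z.1 t, v z.2 t z.1⟫| ≤ ‖u z.1 t‖ ^ 2 + ‖v z.2 t z.1‖ ^ 2 := by
        refine (abs_real_inner_le_norm _ _).trans ?_
        nlinarith [sq_nonneg (‖u z.1 t‖ - ‖v z.2 t z.1‖), norm_nonneg (u z.1 t),
          norm_nonneg (v z.2 t z.1)]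
      calc ‖⟪u z.1 t, v z.2 t z.1⟫ * (p z.2 t z.1 * q z.2)‖
          = |⟪u z.1 t, v z.2 t z.1⟫| * (p z.2 t z.1 * q z.2) := by
            rw [norm_mul, Real.norm_eq_abs, Real.norm_eq_abs, abs_of_nonneg hz]
        _ ≤ (‖u z.1 t‖ ^ 2 + ‖v z.2 t z.1‖ ^ 2) * (p z.2 t z.1 * q z.2) :=
            mul_le_mul_of_nonneg_right h1 hz
        _ = ‖u z.1 t‖ ^ 2 * (p z.2 t z.1 * q z.2) + ‖v z.2 t z.1‖ ^ 2 * (p z.2 t z.1 * q z.2) := by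
            ring
  -- the pointwise identity for a.e. x
  have hae : ∀ᵐ x ∂μ,
      (∫ x₁ in Ω, ‖u x t - v x₁ t x‖ ^ 2 * (p x₁ t x * q x₁))
        - ‖u x t - marginalVel Ω q p v t x‖ ^ 2 * marginalPath Ω q p t x
      = (∫ x₁ in Ω, ‖v x₁ t x‖ ^ 2 * (p x₁ t x * q x₁))
        - ‖marginalVel Ω q p v t x‖ ^ 2 * marginalPath Ω q p t x := by
    filter_upwards [ae_restrict_mem hΩ, HP.prod_right_ae, hv_int.prod_right_ae,
      hu3.prod_right_ae, Huu.prod_right_ae, Hin.prod_right_ae]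
      with x hx hPx hvx hux huux hinx
    have hMdef : marginalPath Ω q p t x = ∫ x₁ in Ω, p x₁ t x * q x₁ := rfl
    have hVdef : marginalVel Ω q p v t x
        = (marginalPath Ω q p t x)⁻¹ • ∫ x₁ in Ω, (p x₁ t x * q x₁) • v x₁ t x := rfl
    have hPnnx : ∀ x₁ ∈ Ω, 0 ≤ p x₁ t x * q x₁ := fun x₁ hx₁ =>
      mul_nonneg (hp_nonneg _ hx₁ t ht _ hx) (hq_nonneg _ hx₁)
    have hPnnxae : 0 ≤ᵐ[μ] fun x₁ => p x₁ t x * q x₁ := by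
      filter_upwards [ae_restrict_mem hΩ] with x₁ h using hPnnx x₁ h
    have hM0 : 0 ≤ marginalPath Ω q p t x := by
      rw [hMdef]; exact setIntegral_nonneg hΩ hPnnx
    have hpair : Measurable fun x₁ : EuclideanSpace ℝ (Fin d) =>
        ((x₁, (t, x)) : EuclideanSpace ℝ (Fin d) × ℝ × EuclideanSpace ℝ (Fin d)) :=
      measurable_id.prodMk measurable_const
    have hpm1 : Measurable fun x₁ => p x₁ t x := hp_meas.comp hpair
    have hvm1 : Measurable fun x₁ => v x₁ t x := hv_meas.comp hpair
    have hIi : Integrable (fun x₁ => (p x₁ t x * q x₁) • v x₁ t x) μ := by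
      refine Integrable.mono' (hPx.add hvx) ?_ ?_
      · exact ((hpm1.mul hq_meas).smul hvm1).aestronglyMeasurable
      · filter_upwards [hPnnxae] with x₁ hP
        have h1 : ‖v x₁ t x‖ ≤ 1 + ‖v x₁ t x‖ ^ 2 := by
          nlinarith [sq_nonneg (‖v x₁ t x‖ - 1), norm_nonneg (v x₁ t x)]
        calc ‖(p x₁ t x * q x₁) • v x₁ t x‖ = (p x₁ t x * q x₁) * ‖v x₁ t x‖ := by
              rw [norm_smul, Real.norm_eq_abs, abs_of_nonneg hP]
          _ ≤ (p x₁ t x * q x₁) * (1 + ‖v x₁ t x‖ ^ 2) := by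
              exact mul_le_mul_of_nonneg_left h1 hP
          _ = p x₁ t x * q x₁ + ‖v x₁ t x‖ ^ 2 * (p x₁ t x * q x₁) := by ring
    have hI_eq : ∫ x₁ in Ω, ⟪u x t, v x₁ t x⟫ * (p x₁ t x * q x₁)
        = ⟪u x t, ∫ x₁ in Ω, (p x₁ t x * q x₁) • v x₁ t x⟫ := by
      rw [← integral_inner hIi]
      refine integral_congr_ae (Filter.Eventually.of_forall fun x₁ => ?_)
      simp only [real_inner_smul_right]; ring
    have hVM : ⟪u x t, ∫ x₁ in Ω, (p x₁ t x * q x₁) • v x₁ t x⟫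
        = ⟪u x t, marginalVel Ω q p v t x⟫ * marginalPath Ω q p t x := by
      rcases eq_or_ne (marginalPath Ω q p t x) 0 with h0 | h0
      · have hP0 : (fun x₁ => p x₁ t x * q x₁) =ᵐ[μ] 0 := by
          refine (integral_eq_zero_iff_of_nonneg_ae hPnnxae hPx).mp ?_
          rw [← hMdef]; exact h0
        have hI0 : (∫ x₁ in Ω, (p x₁ t x * q x₁) • v x₁ t x) = 0 := by
          calc (∫ x₁ in Ω, (p x₁ t x * q x₁) • v x₁ t x) = ∫ _x₁ in Ω,
                (0 : EuclideanSpace ℝ (Fin d)) := by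
                refine integral_congr_ae (hP0.mono fun x₁ h => ?_)
                simp only [Pi.zero_apply] at h
                simp [h]
            _ = 0 := integral_zero _ _
        simp [hI0, h0]
      · rw [hVdef, real_inner_smul_right]
        field_simp
    have hexp : ∀ x₁, ‖u x t - v x₁ t x‖ ^ 2 * (p x₁ t x * q x₁)
        = ‖u x t‖ ^ 2 * (p x₁ t x * q x₁)
          - 2 * (⟪u x t, v x₁ t x⟫ * (p x₁ t x * q x₁))
          + ‖v x₁ t x‖ ^ 2 * (p x₁ t x * q x₁) := fun x₁ => by
      rw [norm_sub_sq_real]; ring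
    have hsplit : ∫ x₁ in Ω, ‖u x t - v x₁ t x‖ ^ 2 * (p x₁ t x * q x₁)
        = ‖u x t‖ ^ 2 * marginalPath Ω q p t x
          - 2 * (⟪u x t, marginalVel Ω q p v t x⟫ * marginalPath Ω q p t x)
          + ∫ x₁ in Ω, ‖v x₁ t x‖ ^ 2 * (p x₁ t x * q x₁) := by
      have hBi : Integrable (fun x₁ => 2 * (⟪u x t, v x₁ t x⟫ * (p x₁ t x * q x₁))) μ :=
        hinx.const_mul 2
      calc ∫ x₁ in Ω, ‖u x t - v x₁ t x‖ ^ 2 * (p x₁ t x * q x₁)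
          = ∫ x₁ in Ω, (‖u x t‖ ^ 2 * (p x₁ t x * q x₁)
              - 2 * (⟪u x t, v x₁ t x⟫ * (p x₁ t x * q x₁))
              + ‖v x₁ t x‖ ^ 2 * (p x₁ t x * q x₁)) := by simp only [hexp]
        _ = (∫ x₁ in Ω, ‖u x t‖ ^ 2 * (p x₁ t x * q x₁))
              - (∫ x₁ in Ω, 2 * (⟪u x t, v x₁ t x⟫ * (p x₁ t x * q x₁)))
              + ∫ x₁ in Ω, ‖v x₁ t x‖ ^ 2 * (p x₁ t x * q x₁) := by
            have e1 : ∫ x₁ in Ω, (‖u x t‖ ^ 2 * (p x₁ t x * q x₁)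
                  - 2 * (⟪u x t, v x₁ t x⟫ * (p x₁ t x * q x₁))
                  + ‖v x₁ t x‖ ^ 2 * (p x₁ t x * q x₁))
                = (∫ x₁ in Ω, (‖u x t‖ ^ 2 * (p x₁ t x * q x₁)
                    - 2 * (⟪u x t, v x₁ t x⟫ * (p x₁ t x * q x₁))))
                  + ∫ x₁ in Ω, ‖v x₁ t x‖ ^ 2 * (p x₁ t x * q x₁) :=
              integral_add (huux.sub hBi) hvx
            have e2 : ∫ x₁ in Ω, (‖u x t‖ ^ 2 * (p x₁ t x * q x₁)
                  - 2 * (⟪u x t, v x₁ t x⟫ * (p x₁ t x * q x₁)))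
                = (∫ x₁ in Ω, ‖u x t‖ ^ 2 * (p x₁ t x * q x₁))
                  - ∫ x₁ in Ω, 2 * (⟪u x t, v x₁ t x⟫ * (p x₁ t x * q x₁)) :=
              integral_sub huux hBi
            rw [e1, e2]
        _ = ‖u x t‖ ^ 2 * marginalPath Ω q p t x
              - 2 * (⟪u x t, marginalVel Ω q p v t x⟫ * marginalPath Ω q p t x)
              + ∫ x₁ in Ω, ‖v x₁ t x‖ ^ 2 * (p x₁ t x * q x₁) := by
            rw [integral_const_mul, integral_const_mul, hI_eq, hVM, ← hMdef]
    rw [hsplit, norm_sub_sq_real]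
    ring
  -- assemble the x-integrals
  have hA : Integrable (fun x => ∫ x₁ in Ω, ‖u x t - v x₁ t x‖ ^ 2 * (p x₁ t x * q x₁)) μ :=
    hu3.integral_prod_left
  have hC : Integrable (fun x => ∫ x₁ in Ω, ‖v x₁ t x‖ ^ 2 * (p x₁ t x * q x₁)) μ :=
    hv_int.integral_prod_left
  calc (∫ x in Ω, ∫ x₁ in Ω, ‖u x t - v x₁ t x‖ ^ 2 * (p x₁ t x * q x₁))
        - (∫ x in Ω, ‖u x t - marginalVel Ω q p v t x‖ ^ 2 * marginalPath Ω q p t x)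
      = ∫ x in Ω, ((∫ x₁ in Ω, ‖u x t - v x₁ t x‖ ^ 2 * (p x₁ t x * q x₁))
          - ‖u x t - marginalVel Ω q p v t x‖ ^ 2 * marginalPath Ω q p t x) :=
        (integral_sub hA hu2).symm
    _ = ∫ x in Ω, ((∫ x₁ in Ω, ‖v x₁ t x‖ ^ 2 * (p x₁ t x * q x₁))
          - ‖marginalVel Ω q p v t x‖ ^ 2 * marginalPath Ω q p t x) :=
        integral_congr_ae hae
    _ = (∫ x in Ω, ∫ x₁ in Ω, ‖v x₁ t x‖ ^ 2 * (p x₁ t x * q x₁))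
          - ∫ x in Ω, ‖marginalVel Ω q p v t x‖ ^ 2 * marginalPath Ω q p t x :=
        integral_sub hC hvM_int

theorem lcrfm_sub_lrfm_const
    (Ω : Set (EuclideanSpace ℝ (Fin d))) (hΩ : MeasurableSet Ω)
    (q : EuclideanSpace ℝ (Fin d) → ℝ) (hq_meas : Measurable q)
    (hq_nonneg : ∀ x₁ ∈ Ω, 0 ≤ q x₁) (hq_int : ∫ x₁ in Ω, q x₁ = 1)
    (p : EuclideanSpace ℝ (Fin d) → ℝ → EuclideanSpace ℝ (Fin d) → ℝ)
    (hp_meas : Measurable fun z : EuclideanSpace ℝ (Fin d) × ℝ × EuclideanSpace ℝ (Fin d) =>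
      p z.1 z.2.1 z.2.2)
    (hp_nonneg : ∀ x₁ ∈ Ω, ∀ t ∈ Icc (0:ℝ) 1, ∀ x ∈ Ω, 0 ≤ p x₁ t x)
    (hp_int : ∀ x₁ ∈ Ω, ∀ t ∈ Icc (0:ℝ) 1, ∫ x in Ω, p x₁ t x = 1)
    (v : EuclideanSpace ℝ (Fin d) → ℝ → EuclideanSpace ℝ (Fin d) → EuclideanSpace ℝ (Fin d))
    (hv_meas : Measurable fun z : EuclideanSpace ℝ (Fin d) × ℝ × EuclideanSpace ℝ (Fin d) =>
      v z.1 z.2.1 z.2.2)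
    -- the marginal probability path is positive in the interior of Ω
    (hpos : ∀ t ∈ Icc (0:ℝ) 1, ∀ x ∈ interior Ω, 0 < marginalPath Ω q p t x)
    -- the integrals involving only the conditional/marginal velocity fields are finite
    (hv_int : ∀ t ∈ Icc (0:ℝ) 1,
      Integrable
        (fun z : EuclideanSpace ℝ (Fin d) × EuclideanSpace ℝ (Fin d) =>
          ‖v z.2 t z.1‖ ^ 2 * (p z.2 t z.1 * q z.2))
        ((volume.restrict Ω).prod (volume.restrict Ω)))
    (hvM_int : ∀ t ∈ Icc (0:ℝ) 1,
      IntegrableOn (fun x => ‖marginalVel Ω q p v t x‖ ^ 2 * marginalPath Ω q p t x) Ω)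
    (hv_int_t : IntegrableOn
      (fun t => ∫ x in Ω, ∫ x₁ in Ω, ‖v x₁ t x‖ ^ 2 * (p x₁ t x * q x₁)) (Icc (0:ℝ) 1))
    (hvM_int_t : IntegrableOn
      (fun t => ∫ x in Ω, ‖marginalVel Ω q p v t x‖ ^ 2 * marginalPath Ω q p t x)
      (Icc (0:ℝ) 1))
    -- a fixed admissible velocity model
    (u : EuclideanSpace ℝ (Fin d) → ℝ → EuclideanSpace ℝ (Fin d))
    (hu : Admissible Ω q p v u) :
    LCRFM Ω q p v u - LRFM Ω q p v u
      = ∫ t in Icc (0:ℝ) 1,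
          ((∫ x in Ω, ∫ x₁ in Ω, ‖v x₁ t x‖ ^ 2 * (p x₁ t x * q x₁))
            - ∫ x in Ω, ‖marginalVel Ω q p v t x‖ ^ 2 * marginalPath Ω q p t x) ∧
    ∀ u₁ u₂ : EuclideanSpace ℝ (Fin d) → ℝ → EuclideanSpace ℝ (Fin d),
      Admissible Ω q p v u₁ → Admissible Ω q p v u₂ →
        LCRFM Ω q p v u₁ - LCRFM Ω q p v u₂ = LRFM Ω q p v u₁ - LRFM Ω q p v u₂ := by
  have main : ∀ w : EuclideanSpace ℝ (Fin d) → ℝ → EuclideanSpace ℝ (Fin d),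
      Admissible Ω q p v w →
      LCRFM Ω q p v w - LRFM Ω q p v w
        = ∫ t in Icc (0:ℝ) 1,
            ((∫ x in Ω, ∫ x₁ in Ω, ‖v x₁ t x‖ ^ 2 * (p x₁ t x * q x₁))
              - ∫ x in Ω, ‖marginalVel Ω q p v t x‖ ^ 2 * marginalPath Ω q p t x) := by
    intro w hw
    obtain ⟨hw1, hw2, hw3, hw4, hw5⟩ := hw
    calc LCRFM Ω q p v w - LRFM Ω q p v w
        = ∫ t in Icc (0:ℝ) 1,
            ((∫ x in Ω, ∫ x₁ in Ω, ‖w x t - v x₁ t x‖ ^ 2 * (p x₁ t x * q x₁))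
              - ∫ x in Ω, ‖w x t - marginalVel Ω q p v t x‖ ^ 2 * marginalPath Ω q p t x) :=
          (integral_sub hw5 hw4).symm
      _ = ∫ t in Icc (0:ℝ) 1,
            ((∫ x in Ω, ∫ x₁ in Ω, ‖v x₁ t x‖ ^ 2 * (p x₁ t x * q x₁))
              - ∫ x in Ω, ‖marginalVel Ω q p v t x‖ ^ 2 * marginalPath Ω q p t x) := by
          refine setIntegral_congr_fun measurableSet_Icc fun t ht => ?_
          exact key_t Ω hΩ q hq_meas hq_nonneg hq_int p hp_meas hp_nonneg hp_int v hv_meas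
            t ht (hv_int t ht) (hvM_int t ht) w hw1 (hw2 t ht) (hw3 t ht)
  refine ⟨main u hu, fun u₁ u₂ h₁ h₂ => ?_⟩
  have e₁ := main u₁ h₁
  have e₂ := main u₂ h₂
  linarith
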